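/- Consider the two-player game with strategy sets K_1 = K_2 = (0, 1] ⊆ ℝ and cost functions f_1(x_1, x_2) = (x_1 + x_2)² and f_2(x_1, x_2) = (x_1 + x_2)⁶. For any constants a ≥ 8 and b ≥ 6·2⁶, the function φ(x_1, x_2) = a√x_1 + b√x_2 is a generalized ordinal potential function for this game: for each player i ∈ {1,2}, all x_i, x'_i ∈ (0,1] and all x_{-i} ∈ (0,1], if f_i(x'_i, x_{-i}) − f_i(x_i, x_{-i}) < 0 then φ(x'_i, x_{-i}) − φ(x_i, x_{-i}) < 0. -/
import Mathlib

noncomputable section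

/-- For the two-player game on `K₁ = K₂ = (0,1]` with costs
`f₁(x₁,x₂) = (x₁+x₂)²` and `f₂(x₁,x₂) = (x₁+x₂)⁶`, and any constants `a ≥ 8` and
`b ≥ 6·2⁶`, the function `φ(x₁,x₂) = a√x₁ + b√x₂` is a generalized ordinal potential
function: a unilateral strict cost decrease forces a strict decrease of `φ`. -/
theorem stmt19 (a b : ℝ) (ha : 8 ≤ a) (hb : 6 * 2 ^ 6 ≤ b) :
    (∀ x1 ∈ Set.Ioc (0 : ℝ) 1, ∀ x1' ∈ Set.Ioc (0 : ℝ) 1, ∀ x2 ∈ Set.Ioc (0 : ℝ) 1,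
      (x1' + x2) ^ 2 - (x1 + x2) ^ 2 < 0 →
      (a * Real.sqrt x1' + b * Real.sqrt x2) - (a * Real.sqrt x1 + b * Real.sqrt x2) < 0)
    ∧ (∀ x2 ∈ Set.Ioc (0 : ℝ) 1, ∀ x2' ∈ Set.Ioc (0 : ℝ) 1, ∀ x1 ∈ Set.Ioc (0 : ℝ) 1,
      (x1 + x2') ^ 6 - (x1 + x2) ^ 6 < 0 →
      (a * Real.sqrt x1 + b * Real.sqrt x2') - (a * Real.sqrt x1 + b * Real.sqrt x2) < 0) := by
  have ha0 : (0:ℝ) < a := by linarith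
  have hb0 : (0:ℝ) < b := by norm_num at hb ⊢; linarith
  constructor
  · intro x1 hx1 x1' hx1' x2 hx2 h
    have hsum : x1' + x2 < x1 + x2 := by
      by_contra hc
      push_neg at hc
      have := pow_le_pow_left₀ (by linarith [hx1.1, hx2.1] : (0:ℝ) ≤ x1 + x2) hc 2
      linarith
    have hx : x1' < x1 := by linarith
    have : Real.sqrt x1' < Real.sqrt x1 := Real.sqrt_lt_sqrt (le_of_lt hx1'.1) hx
    nlinarith
  · intro x2 hx2 x2' hx2' x1 hx1 h
    have hsum : x1 + x2' < x1 + x2 := by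
      by_contra hc
      push_neg at hc
      have := pow_le_pow_left₀ (by linarith [hx1.1, hx2.1] : (0:ℝ) ≤ x1 + x2) hc 6
      linarith
    have hx : x2' < x2 := by linarith
    have : Real.sqrt x2' < Real.sqrt x2 := Real.sqrt_lt_sqrt (le_of_lt hx2'.1) hx
    nlinarith
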